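/- Let ℛ be a partial Z-regulus and let E be any element of ℛ. Then the assignment L ↦ L ∩ E is a bijection from the set of directrices of ℛ onto the set of points of E. Consequently, each point of E lies on a unique directrix of ℛ. -/

import Mathlib

/-- The Grassmannian `𝒢` of all subspaces `X ≤ V` with `X ≅ V/X`. -/
def Grass (K V : Type*) [DivisionRing K] [AddCommGroup V] [Module K V] :
    Set (Submodule K V) :=
  {X | Nonempty (X ≃ₗ[K] (V ⧸ X))}

variable {K V : Type*} [DivisionRing K] [AddCommGroup V] [Module K V]

/-- The dimension of the quotient `E / M` (computed as the rank of `E ⧸ (M ∩ E)`). -/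
noncomputable def quotRank (M E : Submodule K V) : Cardinal :=
  Module.rank K (E ⧸ (M.comap E.subtype))

/-- Two subspaces are adjacent if `dim (X/(X ⊓ Y)) = dim (Y/(X ⊓ Y)) = 1`. -/
def Adjacent (X Y : Submodule K V) : Prop :=
  quotRank (X ⊓ Y) X = 1 ∧ quotRank (X ⊓ Y) Y = 1

/-- Two subspaces are distant if they are complementary: `X ⊕ Y = V`. -/
def Distant (X Y : Submodule K V) : Prop := IsCompl X Y

/-- The star `𝒢[M⟩` with centre `M`. -/
def starSet (M : Submodule K V) : Set (Submodule K V) :=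
  {E | M ≤ E ∧ quotRank M E = 1}

/-- `M` is the centre of a star, i.e. there is `X ∈ 𝒢` with `M ≤ X`, `dim (X/M) = 1`. -/
def IsStarCentre (M : Submodule K V) : Prop :=
  ∃ X ∈ Grass K V, M ≤ X ∧ quotRank M X = 1

/-- The top `𝒢⟨N]` with carrier `N`. -/
def topSet (N : Submodule K V) : Set (Submodule K V) :=
  {E | E ≤ N ∧ quotRank E N = 1}

/-- `N` is the carrier of a top, i.e. there is `X ∈ 𝒢` with `X ≤ N`, `dim (N/X) = 1`. -/
def IsTopCarrier (N : Submodule K V) : Prop :=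
  ∃ X ∈ Grass K V, X ≤ N ∧ quotRank X N = 1

/-- An adjacency clique: a set of mutually adjacent elements of `𝒢`. -/
def IsAdjClique (A : Set (Submodule K V)) : Prop :=
  A ⊆ Grass K V ∧ A.Pairwise Adjacent

/-- A maximal adjacency clique. -/
def IsMaxAdjClique (A : Set (Submodule K V)) : Prop :=
  IsAdjClique A ∧ ∀ B, IsAdjClique B → A ⊆ B → A = B

/-- The pencil `𝒢[M,N] = {X ∈ 𝒢 | M < X < N}`. -/
def pencilSet (M N : Submodule K V) : Set (Submodule K V) :=
  {X ∈ Grass K V | M < X ∧ X < N}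

/-- `(M, N)` defines a pencil: there is `X ∈ 𝒢` with `M ≤ X ≤ N` and
`dim (X/M) = dim (N/X) = 1`. -/
def IsPencilPair (M N : Submodule K V) : Prop :=
  ∃ X ∈ Grass K V, M ≤ X ∧ X ≤ N ∧ quotRank M X = 1 ∧ quotRank X N = 1

/-- A pencil in `𝒢`. -/
def IsPencil (S : Set (Submodule K V)) : Prop :=
  ∃ M N : Submodule K V, IsPencilPair M N ∧ S = pencilSet M N

/-- A point is a one-dimensional subspace. -/
def IsPoint (p : Submodule K V) : Prop := Module.rank K p = 1

/-- A line is a two-dimensional subspace. -/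
def IsLine (L : Submodule K V) : Prop := Module.rank K L = 2

/-- Two subspaces meet if they have a common point, i.e. nonzero intersection. -/
def Meets (X Y : Submodule K V) : Prop := X ⊓ Y ≠ ⊥

/-- A distant clique: a set of mutually distant elements of `𝒢`. -/
def IsDistantClique (R : Set (Submodule K V)) : Prop :=
  R ⊆ Grass K V ∧ R.Pairwise Distant

/-- A set has at least three elements. -/
def HasThree (R : Set (Submodule K V)) : Prop :=
  ∃ A ∈ R, ∃ B ∈ R, ∃ C ∈ R, A ≠ B ∧ A ≠ C ∧ B ≠ C

/-- Condition (R2): if a line meets three mutually distinct elements of `R`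
then it meets all elements of `R`. -/
def MeetsThreeMeetsAll (R : Set (Submodule K V)) : Prop :=
  ∀ L : Submodule K V, IsLine L →
    ∀ E₀ ∈ R, ∀ E₁ ∈ R, ∀ E₂ ∈ R, E₀ ≠ E₁ → E₀ ≠ E₂ → E₁ ≠ E₂ →
      Meets L E₀ → Meets L E₁ → Meets L E₂ → ∀ E ∈ R, Meets L E

/-- A partial `Z`-regulus: conditions (R1) and (R2). -/
def IsPartialZRegulus (R : Set (Submodule K V)) : Prop :=
  (IsDistantClique R ∧ HasThree R) ∧ MeetsThreeMeetsAll R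

/-- A `Z`-regulus: a partial `Z`-regulus that is maximal, i.e. not properly
contained in any partial `Z`-regulus. -/
def IsZRegulus (R : Set (Submodule K V)) : Prop :=
  IsPartialZRegulus R ∧ ∀ S : Set (Submodule K V), IsPartialZRegulus S → R ⊆ S → R = S

/-- A directrix of `R`: a line meeting all elements of `R`. -/
def IsDirectrix (R : Set (Submodule K V)) (L : Submodule K V) : Prop :=
  IsLine L ∧ ∀ E ∈ R, Meets L E

/-- Condition (⊠2) from Theorem `Zreg`. -/
def BoxTwo (R : Set (Submodule K V)) : Prop :=
  ∀ E₀ ∈ R, ∀ E₁ ∈ R, ∀ E₂ ∈ R, E₀ ≠ E₁ → E₀ ≠ E₂ → E₁ ≠ E₂ →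
    ∀ W ∈ Grass K V, Adjacent W E₀ → ¬ Distant W E₁ → ¬ Distant W E₂ →
      ∀ E ∈ R, ¬ Distant W E

open Submodule in
lemma aux_eq_of_le_of_rank_eq {W L : Submodule K V} {n : ℕ} (h : W ≤ L)
    (hW : Module.rank K W = n) (hL : Module.rank K L = n) : W = L := by
  have : Module.Finite K L := Module.finite_of_rank_eq_nat hL
  exact Submodule.eq_of_le_of_finrank_eq h
    (by rw [Module.finrank_eq_of_rank_eq hW, Module.finrank_eq_of_rank_eq hL])

open Submodule in
lemma aux_rank_span_singleton {x : V} (hx : x ≠ 0) :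
    Module.rank K (span K {x} : Submodule K V) = 1 := by
  have h : LinearIndependent K (fun y => y : ({x} : Set V) → V) := by
    rw [linearIndependent_unique_iff]; simpa using hx
  rw [rank_span_set h, Cardinal.mk_singleton]

open Submodule in
lemma aux_rank_span_pair {x y : V}
    (h : ∀ s t : K, s • x + t • y = 0 → s = 0 ∧ t = 0) (hxy : x ≠ y) :
    Module.rank K (span K {x, y} : Submodule K V) = 2 := by
  have hli : LinearIndependent K ![x, y] := LinearIndependent.pair_iff.2 h
  have h2 : LinearIndependent K (fun z => z : ({x, y} : Set V) → V) := by
    have : LinearIndependent K (fun z => z : Set.range ![x, y] → V) := hli.linearIndepOn_id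
    have hr : Set.range ![x, y] = {x, y} := by
      simp [Matrix.range_cons, Matrix.range_empty, Set.ext_iff]; tauto
    rwa [hr] at this
  rw [rank_span_set h2]
  rw [Cardinal.mk_insert (by simpa using hxy), Cardinal.mk_singleton]
  norm_num

open Submodule in
lemma aux_point_span {p : Submodule K V} (hp : IsPoint p) :
    ∃ x : V, x ≠ 0 ∧ x ∈ p ∧ p = span K {x} := by
  have h0 : p ≠ ⊥ := by
    intro h; unfold IsPoint at hp; rw [h, rank_bot] at hp; simp at hp
  obtain ⟨x, hxp, hx0⟩ := p.ne_bot_iff.1 h0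
  refine ⟨x, hx0, hxp, (aux_eq_of_le_of_rank_eq (n := 1) ?_ ?_ ?_).symm⟩
  · rwa [span_singleton_le_iff_mem]
  · exact_mod_cast aux_rank_span_singleton hx0
  · show Module.rank K p = ((1:ℕ):Cardinal); exact_mod_cast hp

open Submodule in
lemma aux_point_of_lt {W L : Submodule K V} (hWL : W ≤ L) (hL : IsLine L)
    (h0 : W ≠ ⊥) (hne : W ≠ L) : IsPoint W := by
  unfold IsLine at hL
  have h2 : Module.rank K W ≤ 2 := hL ▸ Submodule.rank_mono hWL
  have h1 : 0 < Module.rank K W := by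
    rw [rank_pos_iff_exists_ne_zero]
    obtain ⟨x, hx, h⟩ := W.ne_bot_iff.1 h0
    exact ⟨⟨x, hx⟩, by simpa using h⟩
  obtain ⟨n, hn⟩ := Cardinal.lt_aleph0.1
    (h2.trans_lt (by exact_mod_cast Cardinal.nat_lt_aleph0 2))
  unfold IsPoint; rw [hn]
  rw [hn] at h1 h2
  have hn2 : n ≠ 2 := by
    rintro rfl
    exact hne (aux_eq_of_le_of_rank_eq (n := 2) hWL hn (by exact_mod_cast hL))
  have hle : n ≤ 2 := by exact_mod_cast h2
  have hpos : 0 < n := by exact_mod_cast h1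
  have : n = 1 := by omega
  simp [this]

/-- Lemma 4.4. For any element `E` of a partial `Z`-regulus `R`,
the assignment `L ↦ L ⊓ E` is a bijection from the set of directrices of `R`
onto the point set of `E`; consequently each point of `E` is on a unique
directrix of `R`. -/
theorem directrix_bijection (hV : 2 < Module.rank K V)
    (R : Set (Submodule K V)) (hR : IsPartialZRegulus R)
    (E : Submodule K V) (hE : E ∈ R) :
    Set.BijOn (fun L => L ⊓ E) {L : Submodule K V | IsDirectrix R L}
      {p : Submodule K V | p ≤ E ∧ IsPoint p} ∧
    ∀ p : Submodule K V, p ≤ E → IsPoint p →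
      ∃! L : Submodule K V, IsDirectrix R L ∧ p ≤ L := by
  classical
  obtain ⟨⟨⟨hRG, hPd⟩, hThree⟩, hR2⟩ := hR
  -- choose two further elements of R distinct from E and each other
  obtain ⟨A, hA, B, hB, C, hC, hAB, hAC, hBC⟩ := hThree
  obtain ⟨E₁, E₂, hE₁R, hE₂R, hE₁E, hE₂E, hE₁₂⟩ :
      ∃ E₁ E₂, E₁ ∈ R ∧ E₂ ∈ R ∧ E₁ ≠ E ∧ E₂ ≠ E ∧ E₁ ≠ E₂ := by
    by_cases h1 : A = E
    · subst h1; exact ⟨B, C, hB, hC, fun h => hAB h.symm, fun h => hAC h.symm, hBC⟩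
    · by_cases h2 : B = E
      · subst h2; exact ⟨A, C, hA, hC, h1, fun h => hBC h.symm, hAC⟩
      · exact ⟨A, B, hA, hB, h1, h2, hAB⟩
  have hcE1 : IsCompl E E₁ := hPd hE hE₁R (Ne.symm hE₁E)
  have hcE2 : IsCompl E E₂ := hPd hE hE₂R (Ne.symm hE₂E)
  have hc12 : IsCompl E₁ E₂ := hPd hE₁R hE₂R hE₁₂
  have z1 : ∀ v : V, v ∈ E → v ∈ E₁ → v = 0 := by
    intro v h h'
    have hv : v ∈ E ⊓ E₁ := ⟨h, h'⟩
    rwa [hcE1.disjoint.eq_bot, Submodule.mem_bot] at hv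
  have z2 : ∀ v : V, v ∈ E → v ∈ E₂ → v = 0 := by
    intro v h h'
    have hv : v ∈ E ⊓ E₂ := ⟨h, h'⟩
    rwa [hcE2.disjoint.eq_bot, Submodule.mem_bot] at hv
  have z12 : ∀ v : V, v ∈ E₁ → v ∈ E₂ → v = 0 := by
    intro v h h'
    have hv : v ∈ E₁ ⊓ E₂ := ⟨h, h'⟩
    rwa [hc12.disjoint.eq_bot, Submodule.mem_bot] at hv
  -- canonical form of a directrix through a point of E
  have key : ∀ L, IsDirectrix R L → ∀ x : V, x ≠ 0 → x ∈ E → x ∈ L →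
      ∃ w : V, w ∈ E₁ ∧ x + w ∈ E₂ ∧ L = Submodule.span K {x, w} := by
    intro L hL x hx0 hxE hxL
    obtain ⟨hLine, hMeets⟩ := hL
    obtain ⟨b, hb, hb0⟩ := (Submodule.ne_bot_iff _).1 (hMeets E₁ hE₁R)
    obtain ⟨hbL, hbE₁⟩ := hb
    have hind : ∀ s t : K, s • x + t • b = 0 → s = 0 ∧ t = 0 := by
      intro s t hst
      have h1 : s • x = -(t • b) := eq_neg_of_add_eq_zero_left hst
      have hmem1 : s • x ∈ E := E.smul_mem s hxE
      have hmem2 : s • x ∈ E₁ := h1 ▸ E₁.neg_mem (E₁.smul_mem t hbE₁)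
      have hsx : s • x = 0 := z1 _ hmem1 hmem2
      have htb : t • b = 0 := by rwa [hsx, zero_add] at hst
      constructor
      · rcases smul_eq_zero.1 hsx with h | h
        · exact h
        · exact absurd h hx0
      · rcases smul_eq_zero.1 htb with h | h
        · exact h
        · exact absurd h hb0
    have hxb : x ≠ b := by
      rintro rfl; exact hx0 (z1 _ hxE hbE₁)
    have hspan : Submodule.span K {x, b} = L := by
      refine aux_eq_of_le_of_rank_eq (n := 2) ?_ ?_ ?_
      · rw [Submodule.span_le, Set.insert_subset_iff, Set.singleton_subset_iff]
        exact ⟨hxL, hbL⟩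
      · exact_mod_cast aux_rank_span_pair hind hxb
      · exact_mod_cast hLine
    obtain ⟨z, hz, hz0⟩ := (Submodule.ne_bot_iff _).1 (hMeets E₂ hE₂R)
    obtain ⟨hzL, hzE₂⟩ := hz
    rw [← hspan] at hzL
    obtain ⟨s, t, hst⟩ := Submodule.mem_span_pair.1 hzL
    have hs : s ≠ 0 := by
      rintro rfl
      rw [zero_smul, zero_add] at hst
      have hzE₁ : z ∈ E₁ := hst ▸ E₁.smul_mem t hbE₁
      exact hz0 (z12 _ hzE₁ hzE₂)
    have ht : t ≠ 0 := by
      rintro rfl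
      rw [zero_smul, add_zero] at hst
      have hzE : z ∈ E := hst ▸ E.smul_mem s hxE
      exact hz0 (z2 _ hzE hzE₂)
    refine ⟨(s⁻¹ * t) • b, E₁.smul_mem _ hbE₁, ?_, ?_⟩
    · have : x + (s⁻¹ * t) • b = s⁻¹ • z := by
        rw [← hst, smul_add, smul_smul, smul_smul, inv_mul_cancel₀ hs, one_smul]
      rw [this]
      exact E₂.smul_mem _ hzE₂
    · rw [← hspan]
      apply le_antisymm
      · rw [Submodule.span_le, Set.insert_subset_iff, Set.singleton_subset_iff]
        constructor
        · exact Submodule.subset_span (Set.mem_insert _ _)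
        · have hbmem : b ∈ Submodule.span K ({x, (s⁻¹ * t) • b} : Set V) := by
            have hw : (s⁻¹ * t) • b ∈ Submodule.span K ({x, (s⁻¹ * t) • b} : Set V) :=
              Submodule.subset_span (Set.mem_insert_of_mem _ rfl)
            have := Submodule.smul_mem _ (s⁻¹ * t)⁻¹ hw
            rwa [smul_smul, inv_mul_cancel₀ (by
              exact mul_ne_zero (inv_ne_zero hs) ht), one_smul] at this
          exact hbmem
      · rw [Submodule.span_le, Set.insert_subset_iff, Set.singleton_subset_iff]
        constructor
        · exact Submodule.subset_span (Set.mem_insert _ _)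
        · exact Submodule.smul_mem _ _ (Submodule.subset_span (Set.mem_insert_of_mem _ rfl))
  -- uniqueness of the "slope" w
  have wuniq : ∀ x w w' : V, w ∈ E₁ → w' ∈ E₁ → x + w ∈ E₂ → x + w' ∈ E₂ → w = w' := by
    intro x w w' hw hw' hxw hxw'
    have h1 : w - w' ∈ E₁ := E₁.sub_mem hw hw'
    have h2 : w - w' ∈ E₂ := by
      have := E₂.sub_mem hxw hxw'
      rwa [add_sub_add_left_eq_sub] at this
    exact sub_eq_zero.1 (z12 _ h1 h2)
  -- uniqueness of the directrix through a point of E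
  have uniq : ∀ x : V, x ≠ 0 → x ∈ E → ∀ L L', IsDirectrix R L → IsDirectrix R L' →
      x ∈ L → x ∈ L' → L = L' := by
    intro x hx0 hxE L L' hL hL' hxL hxL'
    obtain ⟨w, hw1, hw2, hLeq⟩ := key L hL x hx0 hxE hxL
    obtain ⟨w', hw1', hw2', hLeq'⟩ := key L' hL' x hx0 hxE hxL'
    rw [hLeq, hLeq', wuniq x w w' hw1 hw1' hw2 hw2']
  -- existence of a directrix through a point of E
  have exdir : ∀ x : V, x ≠ 0 → x ∈ E → ∃ L, IsDirectrix R L ∧ x ∈ L := by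
    intro x hx0 hxE
    obtain ⟨b, hbE₁, c, hcE₂, hbc⟩ :=
      Submodule.mem_sup.1 (hc12.sup_eq_top ▸ Submodule.mem_top (x := x))
    have hb0 : b ≠ 0 := by
      rintro rfl
      rw [zero_add] at hbc
      exact hx0 (z2 _ hxE (hbc ▸ hcE₂))
    have hc0 : c ≠ 0 := by
      rintro rfl
      rw [add_zero] at hbc
      exact hx0 (z1 _ hxE (hbc ▸ hbE₁))
    have hind : ∀ s t : K, s • x + t • b = 0 → s = 0 ∧ t = 0 := by
      intro s t hst
      have h1 : s • x = -(t • b) := eq_neg_of_add_eq_zero_left hst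
      have hmem1 : s • x ∈ E := E.smul_mem s hxE
      have hmem2 : s • x ∈ E₁ := h1 ▸ E₁.neg_mem (E₁.smul_mem t hbE₁)
      have hsx : s • x = 0 := z1 _ hmem1 hmem2
      have htb : t • b = 0 := by rwa [hsx, zero_add] at hst
      constructor
      · rcases smul_eq_zero.1 hsx with h | h
        · exact h
        · exact absurd h hx0
      · rcases smul_eq_zero.1 htb with h | h
        · exact h
        · exact absurd h hb0
    have hxb : x ≠ b := by
      rintro rfl; exact hx0 (z1 _ hxE hbE₁)
    set L : Submodule K V := Submodule.span K {x, b} with hLdef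
    have hLine : IsLine L := aux_rank_span_pair hind hxb
    have hxL : x ∈ L := Submodule.subset_span (Set.mem_insert _ _)
    have hbL : b ∈ L := Submodule.subset_span (Set.mem_insert_of_mem _ rfl)
    have hcL : c ∈ L := by
      have : c = x - b := by rw [← hbc]; abel
      rw [this]; exact L.sub_mem hxL hbL
    have hME : Meets L E := (Submodule.ne_bot_iff _).2 ⟨x, ⟨hxL, hxE⟩, hx0⟩
    have hME₁ : Meets L E₁ := (Submodule.ne_bot_iff _).2 ⟨b, ⟨hbL, hbE₁⟩, hb0⟩
    have hME₂ : Meets L E₂ := (Submodule.ne_bot_iff _).2 ⟨c, ⟨hcL, hcE₂⟩, hc0⟩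
    have hall : ∀ E' ∈ R, Meets L E' :=
      hR2 L hLine E hE E₁ hE₁R E₂ hE₂R (Ne.symm hE₁E) (Ne.symm hE₂E) hE₁₂ hME hME₁ hME₂
    exact ⟨L, ⟨hLine, hall⟩, hxL⟩
  -- the map L ↦ L ⊓ E sends directrices to points of E
  have hmaps : ∀ L, IsDirectrix R L → (L ⊓ E ≤ E ∧ IsPoint (L ⊓ E)) := by
    intro L hL
    refine ⟨inf_le_right, aux_point_of_lt inf_le_left hL.1 (hL.2 E hE) ?_⟩
    intro heq
    have hLE : L ≤ E := inf_eq_left.1 heq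
    have : L ⊓ E₁ ≤ ⊥ := by
      rw [← hcE1.disjoint.eq_bot]
      exact inf_le_inf_right _ hLE
    exact hL.2 E₁ hE₁R (le_bot_iff.1 this)
  constructor
  · refine ⟨fun L hL => hmaps L hL, ?_, ?_⟩
    · -- InjOn
      intro L hL L' hL' heq
      have hpt := (hmaps L hL).2
      obtain ⟨x, hx0, hx, _⟩ := aux_point_span hpt
      have heq2 : L ⊓ E = L' ⊓ E := heq
      have hx' : x ∈ L' ⊓ E := heq2 ▸ hx
      exact uniq x hx0 hx.2 L L' hL hL' hx.1 hx'.1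
    · -- SurjOn
      rintro p ⟨hpE, hpPt⟩
      obtain ⟨x, hx0, hxp, hpspan⟩ := aux_point_span hpPt
      obtain ⟨L, hLdir, hxL⟩ := exdir x hx0 (hpE hxp)
      refine ⟨L, hLdir, ?_⟩
      have hple : p ≤ L ⊓ E := by
        rw [hpspan, Submodule.span_singleton_le_iff_mem]
        exact ⟨hxL, hpE hxp⟩
      have := aux_eq_of_le_of_rank_eq (n := 1) hple
        (by exact_mod_cast hpPt) (by exact_mod_cast (hmaps L hLdir).2)
      exact this.symm
  · intro p hpE hpPt
    obtain ⟨x, hx0, hxp, hpspan⟩ := aux_point_span hpPt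
    obtain ⟨L, hLdir, hxL⟩ := exdir x hx0 (hpE hxp)
    refine ⟨L, ⟨hLdir, by rw [hpspan, Submodule.span_singleton_le_iff_mem]; exact hxL⟩, ?_⟩
    rintro L' ⟨hL'dir, hpL'⟩
    exact uniq x hx0 (hpE hxp) L' L hL'dir hLdir (hpL' hxp) hxL
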